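/- Let n ≥ 3, q > 0, and let f : (0,∞) → (0,∞) be continuously differentiable. Let u be a positive C³ function on ℝⁿ satisfying −Δu = f(u)‖∇u‖^q on ℝⁿ. Let a : (0,∞) → (0,∞) be continuously differentiable and let c, β, d ∈ ℝ. On the open set where ∇u ≠ 0 define E_ij = ∂ᵢ∂ⱼu − ∂ᵢu ∂ⱼu / a(u) + c (Δu/‖∇u‖²) ∂ᵢu ∂ⱼu − (1/n)((1+c)Δu − ‖∇u‖²/a(u)) δ_ij. Then at every point where ∇u ≠ 0: u^{−β} ‖∇u‖^{−d} div( u^{β} ‖∇u‖^{d} E·∇u ) = |E|² + (d/‖∇u‖²) |E·∇u|² + ( β/u + (2+(n−1)d)/(n a(u)) ) ⟨E·∇u, ∇u⟩ + ( ((n−1)(1+c)q)/n − 2c − ((n−1)c−1)d/n ) (Δu/‖∇u‖²) ⟨E·∇u, ∇u⟩ + ((n−1)/n)( a′(u) − (n−2)/n ) ‖∇u‖⁴/a(u)² + ((n−1)/n²)(1+c)( q + (n−(n−1)q)c )(Δu)² − ((n−1)/n)( (1+c) f′(u) − (1 + ((2−(n−1)q)/n)(1+c)) f(u)/a(u) )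 ‖∇u‖^{2+q}. -/

import Mathlib

open MeasureTheory

noncomputable section

/-- The `i`-th partial derivative of `g : ℝⁿ → ℝ`. -/
def pd (n : ℕ) (i : Fin n) (g : EuclideanSpace ℝ (Fin n) → ℝ)
    (x : EuclideanSpace ℝ (Fin n)) : ℝ :=
  fderiv ℝ g x (EuclideanSpace.single i (1 : ℝ))

/-- The squared Euclidean norm of the gradient of `g`. -/
def gsq (n : ℕ) (g : EuclideanSpace ℝ (Fin n) → ℝ)
    (x : EuclideanSpace ℝ (Fin n)) : ℝ :=
  ∑ i, (pd n i g x) ^ 2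

/-- The Euclidean norm of the gradient of `g`. -/
def gnorm (n : ℕ) (g : EuclideanSpace ℝ (Fin n) → ℝ)
    (x : EuclideanSpace ℝ (Fin n)) : ℝ :=
  Real.sqrt (gsq n g x)

/-- The Laplacian of `g` (trace of the Hessian). -/
def lap (n : ℕ) (g : EuclideanSpace ℝ (Fin n) → ℝ)
    (x : EuclideanSpace ℝ (Fin n)) : ℝ :=
  ∑ i, pd n i (pd n i g) x

/-- The invariant tensor
`E_ij = ∂ᵢ∂ⱼu − ∂ᵢu ∂ⱼu/a(u) + c (Δu/|∇u|²) ∂ᵢu ∂ⱼu − (1/n)((1+c)Δu − |∇u|²/a(u)) δ_ij`. -/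
def Emat (n : ℕ) (a : ℝ → ℝ) (c : ℝ) (u : EuclideanSpace ℝ (Fin n) → ℝ)
    (x : EuclideanSpace ℝ (Fin n)) (i j : Fin n) : ℝ :=
  pd n i (pd n j u) x - pd n i u x * pd n j u x / a (u x)
    + c * (lap n u x / gsq n u x) * (pd n i u x * pd n j u x)
    - (1 / (n : ℝ)) * ((1 + c) * lap n u x - gsq n u x / a (u x))
        * (if i = j then (1 : ℝ) else 0)

/-- `m_k = ∑ i H_{k i} p_i`. -/
def mv (n : ℕ) (u : EuclideanSpace ℝ (Fin n) → ℝ) (x : EuclideanSpace ℝ (Fin n))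
    (k : Fin n) : ℝ :=
  ∑ i, pd n k (pd n i u) x * pd n i u x

def HasPD (n : ℕ) (g : EuclideanSpace ℝ (Fin n) → ℝ) (x : EuclideanSpace ℝ (Fin n))
    (v : Fin n → ℝ) : Prop :=
  ∃ D : EuclideanSpace ℝ (Fin n) →L[ℝ] ℝ, HasFDerivAt g D x ∧
    ∀ j, D (EuclideanSpace.single j 1) = v j

namespace HasPD

variable {n : ℕ} {g h : EuclideanSpace ℝ (Fin n) → ℝ} {x : EuclideanSpace ℝ (Fin n)}
  {v w : Fin n → ℝ}

theorem pd_eq (hg : HasPD n g x v) (j : Fin n) : pd n j g x = v j := by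
  obtain ⟨D, hD, hv⟩ := hg
  rw [pd, hD.fderiv]; exact hv j

theorem differentiableAt (hg : HasPD n g x v) : DifferentiableAt ℝ g x :=
  hg.choose_spec.1.differentiableAt

theorem of_differentiableAt (hg : DifferentiableAt ℝ g x) :
    HasPD n g x (fun j => pd n j g x) :=
  ⟨fderiv ℝ g x, hg.hasFDerivAt, fun _ => rfl⟩

theorem congr_fun (hg : HasPD n g x v) (hgh : ∀ y, g y = h y) : HasPD n h x v := by
  obtain ⟨D, hD, hv⟩ := hg
  exact ⟨D, hD.congr_of_eventuallyEq (Filter.Eventually.of_forall fun y => (hgh y).symm), hv⟩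

theorem congr_v (hg : HasPD n g x v) (hv : ∀ j, v j = w j) : HasPD n g x w := by
  obtain ⟨D, hD, hvv⟩ := hg
  exact ⟨D, hD, fun j => (hvv j).trans (hv j)⟩

theorem const (r : ℝ) : HasPD n (fun _ => r) x (fun _ => 0) :=
  ⟨0, hasFDerivAt_const r x, fun _ => rfl⟩

theorem add (hg : HasPD n g x v) (hh : HasPD n h x w) :
    HasPD n (fun y => g y + h y) x (fun j => v j + w j) := by
  obtain ⟨D, hD, hv⟩ := hg; obtain ⟨D', hD', hw⟩ := hh
  exact ⟨D + D', hD.add hD', fun j => by simp [hv j, hw j]⟩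

theorem neg (hg : HasPD n g x v) : HasPD n (fun y => -g y) x (fun j => -v j) := by
  obtain ⟨D, hD, hv⟩ := hg
  exact ⟨-D, hD.neg, fun j => by simp [hv j]⟩

theorem sub (hg : HasPD n g x v) (hh : HasPD n h x w) :
    HasPD n (fun y => g y - h y) x (fun j => v j - w j) := by
  obtain ⟨D, hD, hv⟩ := hg; obtain ⟨D', hD', hw⟩ := hh
  exact ⟨D - D', hD.sub hD', fun j => by simp [hv j, hw j]⟩

theorem mul (hg : HasPD n g x v) (hh : HasPD n h x w) :
    HasPD n (fun y => g y * h y) x (fun j => g x * w j + h x * v j) := by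
  obtain ⟨D, hD, hv⟩ := hg; obtain ⟨D', hD', hw⟩ := hh
  exact ⟨g x • D' + h x • D, hD.mul hD', fun j => by simp [hv j, hw j]⟩

theorem const_mul (hg : HasPD n g x v) (r : ℝ) :
    HasPD n (fun y => r * g y) x (fun j => r * v j) :=
  ((const r).mul hg).congr_v (fun j => by simp)

theorem sum {ι : Type*} (s : Finset ι) (F : ι → EuclideanSpace ℝ (Fin n) → ℝ)
    (V : ι → Fin n → ℝ) (hF : ∀ i ∈ s, HasPD n (F i) x (V i)) :
    HasPD n (fun y => ∑ i ∈ s, F i y) x (fun j => ∑ i ∈ s, V i j) := by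
  choose D hD hv using hF
  refine ⟨∑ i ∈ s.attach, D i.1 i.2, ?_, fun j => ?_⟩
  · have h1 : HasFDerivAt (fun y => ∑ i ∈ s.attach, F i.1 y)
        (∑ i ∈ s.attach, D i.1 i.2) x := HasFDerivAt.fun_sum (fun i _ => hD i.1 i.2)
    have h2 : (fun y => ∑ i ∈ s.attach, F i.1 y) = (fun y => ∑ i ∈ s, F i y) := by
      funext y; exact Finset.sum_attach s (fun i => F i y)
    rwa [h2] at h1
  · rw [ContinuousLinearMap.sum_apply]
    rw [show (∑ i ∈ s.attach, (D i.1 i.2) (EuclideanSpace.single j 1))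
        = ∑ i ∈ s.attach, V i.1 j from Finset.sum_congr rfl (fun i _ => hv i.1 i.2 j)]
    exact Finset.sum_attach s (fun i => V i j)

theorem comp {φ : ℝ → ℝ} {φ' : ℝ} (hφ : HasDerivAt φ φ' (g x)) (hg : HasPD n g x v) :
    HasPD n (fun y => φ (g y)) x (fun j => φ' * v j) := by
  obtain ⟨D, hD, hv⟩ := hg
  exact ⟨φ' • D, hφ.comp_hasFDerivAt x hD, fun j => by simp [hv j]⟩

theorem inv (hg : HasPD n g x v) (h0 : g x ≠ 0) :
    HasPD n (fun y => (g y)⁻¹) x (fun j => -(g x ^ 2)⁻¹ * v j) :=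
  comp (hasDerivAt_inv h0) hg

theorem div (hg : HasPD n g x v) (hh : HasPD n h x w) (h0 : h x ≠ 0) :
    HasPD n (fun y => g y / h y) x
      (fun j => g x * (-(h x ^ 2)⁻¹ * w j) + (h x)⁻¹ * v j) :=
  (hg.mul (hh.inv h0)).congr_fun fun y => (div_eq_mul_inv _ _).symm

theorem rpow (hg : HasPD n g x v) (h0 : g x ≠ 0) (r : ℝ) :
    HasPD n (fun y => g y ^ r) x (fun j => r * g x ^ (r - 1) * v j) :=
  comp (Real.hasDerivAt_rpow_const (Or.inl h0)) hg

end HasPD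

lemma contDiff_pd {n : ℕ} {g : EuclideanSpace ℝ (Fin n) → ℝ} {m : ℕ∞}
    (hg : ContDiff ℝ (m + 1) g) (i : Fin n) : ContDiff ℝ m (pd n i g) := by
  have h : ContDiff ℝ m (fderiv ℝ g) := hg.fderiv_right le_rfl
  exact h.clm_apply contDiff_const

lemma schwarz {n : ℕ} {g : EuclideanSpace ℝ (Fin n) → ℝ}
    (hg : ContDiff ℝ 2 g) (i k : Fin n) (y : EuclideanSpace ℝ (Fin n)) :
    pd n i (pd n k g) y = pd n k (pd n i g) y := by
  have hsym : IsSymmSndFDerivAt ℝ g y :=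
    (hg.contDiffAt).isSymmSndFDerivAt (by simp [minSmoothness_of_isRCLikeNormedField])
  have hdiff : DifferentiableAt ℝ (fderiv ℝ g) y :=
    ((hg.fderiv_right (m := 1) (by norm_num)).differentiable one_ne_zero).differentiableAt
  have key : ∀ a b : Fin n, pd n a (pd n b g) y
      = fderiv ℝ (fderiv ℝ g) y (EuclideanSpace.single a (1:ℝ))
          (EuclideanSpace.single b (1:ℝ)) := by
    intro a b
    have h1 : HasFDerivAt (fun z => fderiv ℝ g z (EuclideanSpace.single b (1:ℝ)))
        ((ContinuousLinearMap.apply ℝ ℝ (EuclideanSpace.single b (1:ℝ))).comp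
          (fderiv ℝ (fderiv ℝ g) y)) y :=
      (ContinuousLinearMap.apply ℝ ℝ (EuclideanSpace.single b (1:ℝ))).hasFDerivAt.comp y
        hdiff.hasFDerivAt
    rw [pd, show (pd n b g) = (fun z => fderiv ℝ g z (EuclideanSpace.single b (1:ℝ)))
      from rfl, h1.fderiv]
    rfl
  rw [key i k, key k i, hsym]

set_option maxHeartbeats 4000000 in
/-- The key differential identity for `-Δu = f(u)|∇u|^q` on Euclidean space. -/
theorem stmt_9 (n : ℕ) (hn : 3 ≤ n) (q : ℝ) (hq : 0 < q)
    (f f' : ℝ → ℝ)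
    (hf' : ∀ v : ℝ, 0 < v → HasDerivAt f (f' v) v)
    (hf'cont : ContinuousOn f' (Set.Ioi 0))
    (hfpos : ∀ v : ℝ, 0 < v → 0 < f v)
    (a a' : ℝ → ℝ)
    (ha' : ∀ v : ℝ, 0 < v → HasDerivAt a (a' v) v)
    (ha'cont : ContinuousOn a' (Set.Ioi 0))
    (hapos : ∀ v : ℝ, 0 < v → 0 < a v)
    (c β d : ℝ)
    (u : EuclideanSpace ℝ (Fin n) → ℝ) (hu : ContDiff ℝ 3 u) (hupos : ∀ x, 0 < u x)
    (heq : ∀ x, -lap n u x = f (u x) * gnorm n u x ^ q) :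
    ∀ x, gsq n u x ≠ 0 →
      u x ^ (-β) * gnorm n u x ^ (-d) *
        (∑ j, pd n j
          (fun y => u y ^ β * gnorm n u y ^ d * ∑ i, Emat n a c u y i j * pd n i u y) x)
      = (∑ i, ∑ j, (Emat n a c u x i j) ^ 2)
        + d / gsq n u x * (∑ j, (∑ i, Emat n a c u x i j * pd n i u x) ^ 2)
        + (β / u x + (2 + ((n : ℝ) - 1) * d) / ((n : ℝ) * a (u x)))
            * (∑ j, (∑ i, Emat n a c u x i j * pd n i u x) * pd n j u x)
        + (((n : ℝ) - 1) * (1 + c) * q / (n : ℝ) - 2 * c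
            - (((n : ℝ) - 1) * c - 1) * d / (n : ℝ))
            * (lap n u x / gsq n u x)
            * (∑ j, (∑ i, Emat n a c u x i j * pd n i u x) * pd n j u x)
        + ((n : ℝ) - 1) / (n : ℝ) * (a' (u x) - ((n : ℝ) - 2) / (n : ℝ))
            * (gsq n u x) ^ 2 / (a (u x)) ^ 2
        + ((n : ℝ) - 1) / (n : ℝ) ^ 2 * (1 + c)
            * (q + ((n : ℝ) - ((n : ℝ) - 1) * q) * c) * (lap n u x) ^ 2
        - ((n : ℝ) - 1) / (n : ℝ)
            * ((1 + c) * f' (u x)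
              - (1 + (2 - ((n : ℝ) - 1) * q) / (n : ℝ) * (1 + c)) * f (u x) / a (u x))
            * gnorm n u x ^ (2 + q) := by
  intro x hW0
  have hUpos := hupos x
  have hU0 : u x ≠ 0 := ne_of_gt hUpos
  have hApos := hapos (u x) hUpos
  have hA0 : a (u x) ≠ 0 := ne_of_gt hApos
  have hWnn : ∀ y, (0:ℝ) ≤ gsq n u y := fun y => Finset.sum_nonneg fun i _ => sq_nonneg _
  have hWpos : 0 < gsq n u x := lt_of_le_of_ne (hWnn x) (Ne.symm hW0)
  have hgn : ∀ (y : EuclideanSpace ℝ (Fin n)) (r : ℝ),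
      gnorm n u y ^ r = gsq n u y ^ (r / 2) := by
    intro y r
    rw [gnorm, Real.sqrt_eq_rpow, ← Real.rpow_mul (hWnn y)]
    congr 1; ring
  have hlapN : ∀ y, lap n u y = -(f (u y) * gsq n u y ^ (q / 2)) := by
    intro y
    have h1 := heq y
    rw [hgn y q] at h1
    linarith
  simp only [Emat, hlapN, hgn]
  -- ===== analytic part =====
  have hu2 : ContDiff ℝ 2 u := hu.of_le (by norm_num)
  have hpduC : ∀ i, ContDiff ℝ 2 (pd n i u) :=
    fun i => contDiff_pd (m := 2) (by exact_mod_cast hu) i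
  have hpd2C : ∀ i j, ContDiff ℝ 1 (pd n i (pd n j u)) :=
    fun i j => contDiff_pd (m := 1) (by exact_mod_cast hpduC j) i
  have hsymf : ∀ (i j : Fin n) (y : EuclideanSpace ℝ (Fin n)),
      pd n i (pd n j u) y = pd n j (pd n i u) y := fun i j y => schwarz hu2 i j y
  have hPu : HasPD n u x (fun k => pd n k u x) :=
    HasPD.of_differentiableAt ((hu.differentiable (by norm_num)).differentiableAt)
  have hP1 : ∀ i, HasPD n (pd n i u) x (fun k => pd n k (pd n i u) x) :=
    fun i => HasPD.of_differentiableAt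
      (((hpduC i).differentiable (by norm_num)).differentiableAt)
  have hP2 : ∀ i j, HasPD n (pd n i (pd n j u)) x
      (fun k => pd n k (pd n i (pd n j u)) x) :=
    fun i j => HasPD.of_differentiableAt
      (((hpd2C i j).differentiable one_ne_zero).differentiableAt)
  have hPgsq : HasPD n (gsq n u) x (fun k => 2 * mv n u x k) := by
    have h0 : HasPD n (fun y => ∑ i, pd n i u y ^ 2) x
        (fun k => ∑ i, (pd n i u x * pd n k (pd n i u) x
          + pd n i u x * pd n k (pd n i u) x)) :=
      HasPD.sum Finset.univ _ _
        (fun i _ => ((hP1 i).mul (hP1 i)).congr_fun (fun y => (pow_two _).symm))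
    refine (h0.congr_fun (fun y => rfl)).congr_v (fun k => ?_)
    rw [mv, Finset.mul_sum]
    exact Finset.sum_congr rfl fun i _ => by ring
  have hPau : HasPD n (fun y => a (u y)) x (fun k => a' (u x) * pd n k u x) :=
    HasPD.comp (ha' (u x) hUpos) hPu
  have hPfu : HasPD n (fun y => f (u y)) x (fun k => f' (u x) * pd n k u x) :=
    HasPD.comp (hf' (u x) hUpos) hPu
  have hPR := hPgsq.rpow hW0 (q/2)
  have hPN := (hPfu.mul hPR).neg
  have hPUb := hPu.rpow hU0 β
  have hPWd := hPgsq.rpow hW0 (d/2)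
  have hthird : ∀ i : Fin n, (∑ j, pd n j (pd n i (pd n j u)) x) = -(f (u x) * (q / 2 * gsq n u x ^ (q / 2 - 1) * (2 * mv n u x i)) + gsq n u x ^ (q / 2) * (f' (u x) * pd n i u x)) := by
    intro i
    have hPlapN := hPN.congr_fun (fun y => (hlapN y).symm)
    calc (∑ j, pd n j (pd n i (pd n j u)) x)
        = ∑ j, pd n i (pd n j (pd n j u)) x :=
          Finset.sum_congr rfl fun j _ => schwarz (hpduC j) j i x
      _ = pd n i (lap n u) x :=
          (((HasPD.sum Finset.univ (fun j => pd n j (pd n j u))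
            (fun j => fun k => pd n k (pd n j (pd n j u)) x)
            (fun j _ => hP2 j j)).congr_fun (fun y => rfl)).pd_eq i).symm
      _ = _ := hPlapN.pd_eq i
  -- ===== collapse lemmas =====
  have sum_delta : ∀ (j : Fin n) (Y : Fin n → ℝ),
      (∑ i, (if i = j then (1:ℝ) else 0) * Y i) = Y j := by
    intro j Y
    simp [ite_mul]
  have sum_delta' : ∀ (i : Fin n) (Y : Fin n → ℝ),
      (∑ j, (if i = j then (1:ℝ) else 0) * Y j) = Y i := by
    intro i Y
    simp [ite_mul]
  have collapse : ∀ (j : Fin n) (A1 A2 : ℝ) (t Y : Fin n → ℝ),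
      (∑ i, (A1 * pd n i u x ^ 2 + A2 * (pd n j (pd n i u) x * pd n i u x) + t i
        + (if i = j then (1:ℝ) else 0) * Y i))
      = A1 * gsq n u x + A2 * mv n u x j + (∑ i, t i) + Y j := by
    intro j A1 A2 t Y
    rw [Finset.sum_add_distrib, Finset.sum_add_distrib, Finset.sum_add_distrib,
      ← Finset.mul_sum, ← Finset.mul_sum, sum_delta j Y, gsq, mv]
  have collapse' : ∀ (i : Fin n) (A1 A2 : ℝ) (t Y : Fin n → ℝ),
      (∑ j, (A1 * pd n j u x ^ 2 + A2 * (pd n i (pd n j u) x * pd n j u x) + t j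
        + (if i = j then (1:ℝ) else 0) * Y j))
      = A1 * gsq n u x + A2 * mv n u x i + (∑ j, t j) + Y i := by
    intro i A1 A2 t Y
    rw [Finset.sum_add_distrib, Finset.sum_add_distrib, Finset.sum_add_distrib,
      ← Finset.mul_sum, ← Finset.mul_sum, sum_delta' i Y, gsq, mv]
  have collapse5 : ∀ (B1 B2 B3 B4 B5 C : ℝ) (g5 : Fin n → ℝ),
      (∑ j, (B1 * pd n j u x ^ 2 + B2 * (mv n u x j * pd n j u x) + B3 * mv n u x j ^ 2
        + B4 * pd n j (pd n j u) x + B5 * g5 j + C))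
      = B1 * gsq n u x + B2 * (∑ j, mv n u x j * pd n j u x) + B3 * (∑ j, mv n u x j ^ 2)
        + B4 * lap n u x + B5 * (∑ j, g5 j) + (n:ℝ) * C := by
    intro B1 B2 B3 B4 B5 C g5
    rw [Finset.sum_add_distrib, Finset.sum_add_distrib, Finset.sum_add_distrib,
      Finset.sum_add_distrib, Finset.sum_add_distrib, ← Finset.mul_sum, ← Finset.mul_sum,
      ← Finset.mul_sum, ← Finset.mul_sum, ← Finset.mul_sum, Finset.sum_const,
      Finset.card_univ, Fintype.card_fin, nsmul_eq_mul, gsq, lap]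
  -- ===== E-sums =====
  have hEp : ∀ j : Fin n, (∑ i, (pd n i (pd n j u) x - pd n i u x * pd n j u x / a (u x) + c * (-(f (u x) * gsq n u x ^ (q / 2)) / gsq n u x) * (pd n i u x * pd n j u x) - 1 / (n:ℝ) * ((1 + c) * -(f (u x) * gsq n u x ^ (q / 2)) - gsq n u x / a (u x)) * if i = j then 1 else 0) * pd n i u x)
      = mv n u x j + ((c * (-(f (u x) * gsq n u x ^ (q / 2))) / gsq n u x - (a (u x))⁻¹) * gsq n u x - ((1 + c) * (-(f (u x) * gsq n u x ^ (q / 2))) - gsq n u x / a (u x)) / (n:ℝ)) * pd n j u x := by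
    intro j
    refine (Finset.sum_congr rfl fun i _ => ?_).trans
      ((collapse j ((c * (-(f (u x) * gsq n u x ^ (q / 2))) / gsq n u x - (a (u x))⁻¹) * pd n j u x) 1 (fun _ => 0)
        (fun i => -(((1 + c) * (-(f (u x) * gsq n u x ^ (q / 2))) - gsq n u x / a (u x)) / (n:ℝ)) * pd n i u x)).trans ?_)
    · rw [hsymf i j x]; ring
    · rw [Finset.sum_const_zero]; ring
  have hEpP : (∑ j, (∑ i, (pd n i (pd n j u) x - pd n i u x * pd n j u x / a (u x) + c * (-(f (u x) * gsq n u x ^ (q / 2)) / gsq n u x) * (pd n i u x * pd n j u x) - 1 / (n:ℝ) * ((1 + c) * -(f (u x) * gsq n u x ^ (q / 2)) - gsq n u x / a (u x)) * if i = j then 1 else 0) * pd n i u x) * pd n j u x)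
      = (∑ j, mv n u x j * pd n j u x) + ((c * (-(f (u x) * gsq n u x ^ (q / 2))) / gsq n u x - (a (u x))⁻¹) * gsq n u x - ((1 + c) * (-(f (u x) * gsq n u x ^ (q / 2))) - gsq n u x / a (u x)) / (n:ℝ)) * gsq n u x := by
    calc (∑ j, (∑ i, (pd n i (pd n j u) x - pd n i u x * pd n j u x / a (u x) + c * (-(f (u x) * gsq n u x ^ (q / 2)) / gsq n u x) * (pd n i u x * pd n j u x) - 1 / (n:ℝ) * ((1 + c) * -(f (u x) * gsq n u x ^ (q / 2)) - gsq n u x / a (u x)) * if i = j then 1 else 0) * pd n i u x) * pd n j u x)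
        = ∑ j, (mv n u x j * pd n j u x + ((c * (-(f (u x) * gsq n u x ^ (q / 2))) / gsq n u x - (a (u x))⁻¹) * gsq n u x - ((1 + c) * (-(f (u x) * gsq n u x ^ (q / 2))) - gsq n u x / a (u x)) / (n:ℝ)) * pd n j u x ^ 2) :=
          Finset.sum_congr rfl fun j _ => by rw [hEp j]; ring
      _ = _ := by
          rw [Finset.sum_add_distrib, ← Finset.mul_sum, gsq]
  have hEp2 : (∑ j, (∑ i, (pd n i (pd n j u) x - pd n i u x * pd n j u x / a (u x) + c * (-(f (u x) * gsq n u x ^ (q / 2)) / gsq n u x) * (pd n i u x * pd n j u x) - 1 / (n:ℝ) * ((1 + c) * -(f (u x) * gsq n u x ^ (q / 2)) - gsq n u x / a (u x)) * if i = j then 1 else 0) * pd n i u x) ^ 2)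
      = (∑ j, mv n u x j ^ 2) + 2 * ((c * (-(f (u x) * gsq n u x ^ (q / 2))) / gsq n u x - (a (u x))⁻¹) * gsq n u x - ((1 + c) * (-(f (u x) * gsq n u x ^ (q / 2))) - gsq n u x / a (u x)) / (n:ℝ)) * (∑ j, mv n u x j * pd n j u x) + ((c * (-(f (u x) * gsq n u x ^ (q / 2))) / gsq n u x - (a (u x))⁻¹) * gsq n u x - ((1 + c) * (-(f (u x) * gsq n u x ^ (q / 2))) - gsq n u x / a (u x)) / (n:ℝ)) ^ 2 * gsq n u x := by
    calc (∑ j, (∑ i, (pd n i (pd n j u) x - pd n i u x * pd n j u x / a (u x) + c * (-(f (u x) * gsq n u x ^ (q / 2)) / gsq n u x) * (pd n i u x * pd n j u x) - 1 / (n:ℝ) * ((1 + c) * -(f (u x) * gsq n u x ^ (q / 2)) - gsq n u x / a (u x)) * if i = j then 1 else 0) * pd n i u x) ^ 2)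
        = ∑ j, (mv n u x j ^ 2 + 2 * ((c * (-(f (u x) * gsq n u x ^ (q / 2))) / gsq n u x - (a (u x))⁻¹) * gsq n u x - ((1 + c) * (-(f (u x) * gsq n u x ^ (q / 2))) - gsq n u x / a (u x)) / (n:ℝ)) * (mv n u x j * pd n j u x)
            + ((c * (-(f (u x) * gsq n u x ^ (q / 2))) / gsq n u x - (a (u x))⁻¹) * gsq n u x - ((1 + c) * (-(f (u x) * gsq n u x ^ (q / 2))) - gsq n u x / a (u x)) / (n:ℝ)) ^ 2 * pd n j u x ^ 2) :=
          Finset.sum_congr rfl fun j _ => by rw [hEp j]; ring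
      _ = _ := by
          rw [Finset.sum_add_distrib, Finset.sum_add_distrib, ← Finset.mul_sum,
            ← Finset.mul_sum, gsq]
  have hEsq : (∑ i, ∑ j, (pd n i (pd n j u) x - pd n i u x * pd n j u x / a (u x) + c * (-(f (u x) * gsq n u x ^ (q / 2)) / gsq n u x) * (pd n i u x * pd n j u x) - 1 / (n:ℝ) * ((1 + c) * -(f (u x) * gsq n u x ^ (q / 2)) - gsq n u x / a (u x)) * if i = j then 1 else 0) ^ 2)
      = (∑ i, ∑ j, pd n i (pd n j u) x ^ 2) + 2 * (c * (-(f (u x) * gsq n u x ^ (q / 2))) / gsq n u x - (a (u x))⁻¹) * (∑ j, mv n u x j * pd n j u x) + (c * (-(f (u x) * gsq n u x ^ (q / 2))) / gsq n u x - (a (u x))⁻¹) ^ 2 * gsq n u x ^ 2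
        + ((1 + c) * (-(f (u x) * gsq n u x ^ (q / 2))) - gsq n u x / a (u x)) ^ 2 / (n:ℝ) - 2 * (((1 + c) * (-(f (u x) * gsq n u x ^ (q / 2))) - gsq n u x / a (u x)) / (n:ℝ)) * (-(f (u x) * gsq n u x ^ (q / 2))) - 2 * (c * (-(f (u x) * gsq n u x ^ (q / 2))) / gsq n u x - (a (u x))⁻¹) * (((1 + c) * (-(f (u x) * gsq n u x ^ (q / 2))) - gsq n u x / a (u x)) / (n:ℝ)) * gsq n u x := by
    calc (∑ i, ∑ j, (pd n i (pd n j u) x - pd n i u x * pd n j u x / a (u x) + c * (-(f (u x) * gsq n u x ^ (q / 2)) / gsq n u x) * (pd n i u x * pd n j u x) - 1 / (n:ℝ) * ((1 + c) * -(f (u x) * gsq n u x ^ (q / 2)) - gsq n u x / a (u x)) * if i = j then 1 else 0) ^ 2)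
        = ∑ i, ((c * (-(f (u x) * gsq n u x ^ (q / 2))) / gsq n u x - (a (u x))⁻¹) ^ 2 * pd n i u x ^ 2 * gsq n u x + 2 * (c * (-(f (u x) * gsq n u x ^ (q / 2))) / gsq n u x - (a (u x))⁻¹) * pd n i u x * mv n u x i
            + (∑ j, pd n i (pd n j u) x ^ 2)
            + (((1 + c) * (-(f (u x) * gsq n u x ^ (q / 2))) - gsq n u x / a (u x)) ^ 2 / (n:ℝ) ^ 2 - 2 * (((1 + c) * (-(f (u x) * gsq n u x ^ (q / 2))) - gsq n u x / a (u x)) / (n:ℝ)) * pd n i (pd n i u) x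
              - 2 * (c * (-(f (u x) * gsq n u x ^ (q / 2))) / gsq n u x - (a (u x))⁻¹) * (((1 + c) * (-(f (u x) * gsq n u x ^ (q / 2))) - gsq n u x / a (u x)) / (n:ℝ)) * (pd n i u x * pd n i u x))) := by
          refine Finset.sum_congr rfl fun i _ => ?_
          refine (Finset.sum_congr rfl fun j _ => ?_).trans
            ((collapse' i ((c * (-(f (u x) * gsq n u x ^ (q / 2))) / gsq n u x - (a (u x))⁻¹) ^ 2 * pd n i u x ^ 2) (2 * (c * (-(f (u x) * gsq n u x ^ (q / 2))) / gsq n u x - (a (u x))⁻¹) * pd n i u x)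
              (fun j => pd n i (pd n j u) x ^ 2)
              (fun j => ((1 + c) * (-(f (u x) * gsq n u x ^ (q / 2))) - gsq n u x / a (u x)) ^ 2 / (n:ℝ) ^ 2 - 2 * (((1 + c) * (-(f (u x) * gsq n u x ^ (q / 2))) - gsq n u x / a (u x)) / (n:ℝ)) * pd n i (pd n j u) x
                - 2 * (c * (-(f (u x) * gsq n u x ^ (q / 2))) / gsq n u x - (a (u x))⁻¹) * (((1 + c) * (-(f (u x) * gsq n u x ^ (q / 2))) - gsq n u x / a (u x)) / (n:ℝ)) * (pd n i u x * pd n j u x))).trans (by ring))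
          rcases eq_or_ne i j with h | h
          · subst h; simp only [if_pos rfl, if_true]; ring
          · simp only [if_neg h]; ring
      _ = _ := by
          refine ((Finset.sum_congr rfl fun i _ => (?_ : _ = ((c * (-(f (u x) * gsq n u x ^ (q / 2))) / gsq n u x - (a (u x))⁻¹) ^ 2 * gsq n u x
              - 2 * (c * (-(f (u x) * gsq n u x ^ (q / 2))) / gsq n u x - (a (u x))⁻¹) * (((1 + c) * (-(f (u x) * gsq n u x ^ (q / 2))) - gsq n u x / a (u x)) / (n:ℝ))) * pd n i u x ^ 2
            + 2 * (c * (-(f (u x) * gsq n u x ^ (q / 2))) / gsq n u x - (a (u x))⁻¹) * (mv n u x i * pd n i u x) + 0 * mv n u x i ^ 2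
            + (-(2 * (((1 + c) * (-(f (u x) * gsq n u x ^ (q / 2))) - gsq n u x / a (u x)) / (n:ℝ)))) * pd n i (pd n i u) x
            + 1 * (∑ j, pd n i (pd n j u) x ^ 2) + ((1 + c) * (-(f (u x) * gsq n u x ^ (q / 2))) - gsq n u x / a (u x)) ^ 2 / (n:ℝ) ^ 2)).trans
            ((collapse5 _ _ _ _ _ _ _).trans ?_))
          · ring
          · rw [hlapN x]
            have hn0 : (n:ℝ) ≠ 0 := Nat.cast_ne_zero.mpr (by omega)
            field_simp
            ring
  -- ===== divergence of each component =====
  have hdiv : ∀ j : Fin n, pd n j (fun y => u y ^ β * gsq n u y ^ (d / 2) * ∑ i, (pd n i (pd n j u) y - pd n i u y * pd n j u y / a (u y) + c * (-(f (u y) * gsq n u y ^ (q / 2)) / gsq n u y) * (pd n i u y * pd n j u y) - 1 / (n:ℝ) * ((1 + c) * -(f (u y) * gsq n u y ^ (q / 2)) - gsq n u y / a (u y)) * if i = j then 1 else 0) * pd n i u y) x = u x ^ β * gsq n u x ^ (d / 2) * (((-pd n j u x * (-(a (u x) ^ 2)⁻¹ * (a' (u x) * pd n j u x)) - (a (u x))⁻¹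 * pd n j (pd n j u) x + c * (-(f (u x) * gsq n u x ^ (q / 2)) / gsq n u x) * pd n j (pd n j u) x + pd n j u x * (c * (-(f (u x) * gsq n u x ^ (q / 2)) * (-(gsq n u x ^ 2)⁻¹ * (2 * mv n u x j)) + (gsq n u x)⁻¹ * -(f (u x) * (q / 2 * gsq n u x ^ (q / 2 - 1) * (2 * mv n u x j)) + gsq n u x ^ (q / 2) * (f' (u x) * pd n j u x)))))) * gsq n u x + ((-(a (u x))⁻¹ * pd n j u x + c * (-(f (u x) * gsq n u x ^ (q / 2)) / gsq n u x) * pd n j u x - pd n j u x / a (u x) + c * (-(f (u x) * gsq n u x ^ (q / 2)) / gsq n u x) * pd n j u x)) * mv n u x j + (∑ i, (pd n i (pd n j u) x * pd n j (pd n i u) x + pd n i u x * pd n j (pd n i (pd n j u)) x)) + (-(1 / (n:ℝ)) * ((1 + c) * -(f (u x) * gsq n u x ^ (q / 2)) - gsq n u x / a (u x)) * pd n j (pd n j u) x - pd n j u x * (1 / (n:ℝ)) * ((1 + c) * -(f (u x) * (q / 2 * gsq n u x ^ (q / 2 - 1) * (2 * mv n u x j)) + gsq n u x ^ (q / 2)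 * (f' (u x) * pd n j u x)) - (gsq n u x * (-(a (u x) ^ 2)⁻¹ * (a' (u x) * pd n j u x)) + (a (u x))⁻¹ * (2 * mv n u x j))))) + (∑ i, (pd n i (pd n j u) x - pd n i u x * pd n j u x / a (u x) + c * (-(f (u x) * gsq n u x ^ (q / 2)) / gsq n u x) * (pd n i u x * pd n j u x) - 1 / (n:ℝ) * ((1 + c) * -(f (u x) * gsq n u x ^ (q / 2)) - gsq n u x / a (u x)) * if i = j then 1 else 0) * pd n i u x) * (u x ^ β * (d / 2 * gsq n u x ^ (d / 2 - 1) * (2 * mv n u x j)) + gsq n u x ^ (d / 2) * (β * u x ^ (β - 1) * pd n j u x)) := by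
    intro j
    have hE := fun i : Fin n =>
      ((((hP2 i j).sub (((hP1 i).mul (hP1 j)).div hPau hA0)).add
        (((hPN.div hPgsq hW0).const_mul c).mul ((hP1 i).mul (hP1 j)))).sub
        ((((hPN.const_mul (1+c)).sub (hPgsq.div hPau hA0)).const_mul
          (1/(n:ℝ))).mul (HasPD.const (if i = j then (1:ℝ) else 0)))).mul (hP1 i)
    have hBigPD := (hPUb.mul hPWd).mul (HasPD.sum Finset.univ _ _ (fun i _ => hE i))
    refine (hBigPD.pd_eq j).trans ?_
    congr 1
    congr 1
    refine (Finset.sum_congr rfl (fun i _ => ?_)).trans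
      (collapse j ((-pd n j u x * (-(a (u x) ^ 2)⁻¹ * (a' (u x) * pd n j u x)) - (a (u x))⁻¹ * pd n j (pd n j u) x + c * (-(f (u x) * gsq n u x ^ (q / 2)) / gsq n u x) * pd n j (pd n j u) x + pd n j u x * (c * (-(f (u x) * gsq n u x ^ (q / 2)) * (-(gsq n u x ^ 2)⁻¹ * (2 * mv n u x j)) + (gsq n u x)⁻¹ * -(f (u x) * (q / 2 * gsq n u x ^ (q / 2 - 1) * (2 * mv n u x j)) + gsq n u x ^ (q / 2) * (f' (u x) * pd n j u x)))))) ((-(a (u x))⁻¹ * pd n j u x + c * (-(f (u x) * gsq n u x ^ (q / 2)) / gsq n u x) * pd n j u x - pd n j u x / a (u x) + c * (-(f (u x) * gsq n u x ^ (q / 2)) / gsq n u x) * pd n j u x)) (fun i => pd n i (pd n j u) x * pd n j (pd n i u) x + pd n i u x * pd n j (pd n i (pd n j u)) x)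
        (fun i => (-(1 / (n:ℝ)) * ((1 + c) * -(f (u x) * gsq n u x ^ (q / 2)) - gsq n u x / a (u x)) * pd n j (pd n i u) x - pd n i u x * (1 / (n:ℝ)) * ((1 + c) * -(f (u x) * (q / 2 * gsq n u x ^ (q / 2 - 1) * (2 * mv n u x j)) + gsq n u x ^ (q / 2) * (f' (u x) * pd n j u x)) - (gsq n u x * (-(a (u x) ^ 2)⁻¹ * (a' (u x) * pd n j u x)) + (a (u x))⁻¹ * (2 * mv n u x j))))))
    ring
  have hLS : (∑ j, pd n j (fun y => u y ^ β * gsq n u y ^ (d / 2) * ∑ i, (pd n i (pd n j u) y - pd n i u y * pd n j u y / a (u y) + c * (-(f (u y) * gsq n u y ^ (q / 2)) / gsq n u y) * (pd n i u y * pd n j u y) - 1 / (n:ℝ) * ((1 + c) * -(f (u y) * gsq n u y ^ (q / 2)) - gsq n u y / a (u y)) * if i = j then 1 else 0) * pd n i u y) x) = ∑ j, (u x ^ β * gsq n u x ^ (d / 2) * (((-pd n j u x * (-(a (u x) ^ 2)⁻¹ * (a' (u x) * pd n j u x)) - (a (u x))⁻¹ * pd n j (pd n j u) x + c * (-(f (u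 x) * gsq n u x ^ (q / 2)) / gsq n u x) * pd n j (pd n j u) x + pd n j u x * (c * (-(f (u x) * gsq n u x ^ (q / 2)) * (-(gsq n u x ^ 2)⁻¹ * (2 * mv n u x j)) + (gsq n u x)⁻¹ * -(f (u x) * (q / 2 * gsq n u x ^ (q / 2 - 1) * (2 * mv n u x j)) + gsq n u x ^ (q / 2) * (f' (u x) * pd n j u x)))))) * gsq n u x + ((-(a (u x))⁻¹ * pd n j u x + c * (-(f (u x) * gsq n u x ^ (q / 2)) / gsq n u x) * pd n j u x - pd n j u x / a (u x) + c * (-(f (u x) * gsq n u x ^ (q / 2)) / gsq n u x) * pd n j u x)) * mv n u x j + (∑ i, (pd n i (pd n j u) x * pd n j (pd n i u) x + pd n i u x * pd n j (pd n i (pd n j u)) x)) + (-(1 / (n:ℝ)) * ((1 + c) * -(f (u x) * gsq n u x ^ (q / 2)) - gsq n u x / a (u x)) * pd n j (pd n j u) x - pd n j u x * (1 / (n:ℝ)) * ((1 + c) * -(f (u x) * (q / 2 * gsq n u x ^ (q / 2 - 1) * (2 * mv n u x j)) + gsq n u x ^ (q / 2) * (f' (u x) * pd n j u x)) - (gsq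 n u x * (-(a (u x) ^ 2)⁻¹ * (a' (u x) * pd n j u x)) + (a (u x))⁻¹ * (2 * mv n u x j))))) + (∑ i, (pd n i (pd n j u) x - pd n i u x * pd n j u x / a (u x) + c * (-(f (u x) * gsq n u x ^ (q / 2)) / gsq n u x) * (pd n i u x * pd n j u x) - 1 / (n:ℝ) * ((1 + c) * -(f (u x) * gsq n u x ^ (q / 2)) - gsq n u x / a (u x)) * if i = j then 1 else 0) * pd n i u x) * (u x ^ β * (d / 2 * gsq n u x ^ (d / 2 - 1) * (2 * mv n u x j)) + gsq n u x ^ (d / 2) * (β * u x ^ (β - 1) * pd n j u x))) :=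
    Finset.sum_congr rfl fun j _ => hdiv j
  -- ===== third-derivative sum =====
  have hTsum : (∑ j, (∑ i, (pd n i (pd n j u) x * pd n j (pd n i u) x + pd n i u x * pd n j (pd n i (pd n j u)) x)))
      = (∑ i, ∑ j, pd n i (pd n j u) x ^ 2) + (-(f (u x) * q * gsq n u x ^ (q / 2 - 1)) * (∑ j, mv n u x j * pd n j u x) + (-(gsq n u x ^ (q / 2) * f' (u x))) * gsq n u x) := by
    calc (∑ j, (∑ i, (pd n i (pd n j u) x * pd n j (pd n i u) x + pd n i u x * pd n j (pd n i (pd n j u)) x)))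
        = ∑ j, ((∑ i, pd n i (pd n j u) x ^ 2)
            + (∑ i, pd n i u x * pd n j (pd n i (pd n j u)) x)) := by
          refine Finset.sum_congr rfl fun j _ => ?_
          rw [← Finset.sum_add_distrib]
          exact Finset.sum_congr rfl fun i _ => by rw [hsymf j i x]; ring
      _ = (∑ j, ∑ i, pd n i (pd n j u) x ^ 2)
            + ∑ j, ∑ i, pd n i u x * pd n j (pd n i (pd n j u)) x :=
          Finset.sum_add_distrib
      _ = (∑ i, ∑ j, pd n i (pd n j u) x ^ 2) + ∑ i, ∑ j, pd n i u x * pd n j (pd n i (pd n j u)) x := by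
          rw [Finset.sum_comm (f := fun i j => pd n i (pd n j u) x ^ 2)]
          rw [Finset.sum_comm (f := fun j i => pd n i u x * pd n j (pd n i (pd n j u)) x)]
      _ = (∑ i, ∑ j, pd n i (pd n j u) x ^ 2) + ∑ i, pd n i u x * (-(f (u x) * (q / 2 * gsq n u x ^ (q / 2 - 1) * (2 * mv n u x i)) + gsq n u x ^ (q / 2) * (f' (u x) * pd n i u x))) := by
          congr 1
          refine Finset.sum_congr rfl fun i _ => ?_
          rw [← Finset.mul_sum, hthird i]
      _ = (∑ i, ∑ j, pd n i (pd n j u) x ^ 2) + ∑ i, ((-(f (u x) * q * gsq n u x ^ (q / 2 - 1))) * (mv n u x i * pd n i u x)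
            + (-(gsq n u x ^ (q / 2) * f' (u x))) * pd n i u x ^ 2) := by
          congr 1
          exact Finset.sum_congr rfl fun i _ => by ring
      _ = _ := by
          rw [Finset.sum_add_distrib, ← Finset.mul_sum, ← Finset.mul_sum, gsq]
  -- ===== sum of VAL =====
  have hsumVAL : (∑ j, (u x ^ β * gsq n u x ^ (d / 2) * (((-pd n j u x * (-(a (u x) ^ 2)⁻¹ * (a' (u x) * pd n j u x)) - (a (u x))⁻¹ * pd n j (pd n j u) x + c * (-(f (u x) * gsq n u x ^ (q / 2)) / gsq n u x) * pd n j (pd n j u) x + pd n j u x * (c * (-(f (u x) * gsq n u x ^ (q / 2)) * (-(gsq n u x ^ 2)⁻¹ * (2 * mv n u x j)) + (gsq n u x)⁻¹ * -(f (u x) * (q / 2 * gsq n u x ^ (q / 2 - 1) * (2 * mv n u x j)) + gsq n u x ^ (q / 2) * (f' (u x) * pd n j u x)))))) * gsq n u x + ((-(a (u x))⁻¹ * pd n j u x + c * (-(f (u x) * gsq n u x ^ (q / 2)) / gsq n u x) * pd n j u x - pd n j u x / a (u x) + c * (-(f (u x) * gsq n u x ^ (q / 2)) / gsq n u x) * pd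 n j u x)) * mv n u x j + (∑ i, (pd n i (pd n j u) x * pd n j (pd n i u) x + pd n i u x * pd n j (pd n i (pd n j u)) x)) + (-(1 / (n:ℝ)) * ((1 + c) * -(f (u x) * gsq n u x ^ (q / 2)) - gsq n u x / a (u x)) * pd n j (pd n j u) x - pd n j u x * (1 / (n:ℝ)) * ((1 + c) * -(f (u x) * (q / 2 * gsq n u x ^ (q / 2 - 1) * (2 * mv n u x j)) + gsq n u x ^ (q / 2) * (f' (u x) * pd n j u x)) - (gsq n u x * (-(a (u x) ^ 2)⁻¹ * (a' (u x) * pd n j u x)) + (a (u x))⁻¹ * (2 * mv n u x j))))) + (∑ i, (pd n i (pd n j u) x - pd n i u x * pd n j u x / a (u x) + c * (-(f (u x) * gsq n u x ^ (q / 2)) / gsq n u x) * (pd n i u x * pd n j u x) - 1 / (n:ℝ) * ((1 + c) * -(f (u x) * gsq n u x ^ (q / 2)) - gsq n u x / a (u x)) * if i = j then 1 else 0) * pd n i u x) * (u x ^ β * (d / 2 * gsq n u x ^ (d / 2 - 1) * (2 * mv n u x j)) + gsq n u x ^ (d / 2) * (β * u x ^ (β - 1) * pd n j u x))))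
      = (u x ^ β * gsq n u x ^ (d / 2) * (a' (u x) * gsq n u x / a (u x) ^ 2 - c * gsq n u x ^ (q / 2) * f' (u x) + (1 + c) * gsq n u x ^ (q / 2) * f' (u x) / (n:ℝ) - gsq n u x * a' (u x) / ((n:ℝ) * a (u x) ^ 2)) + ((c * (-(f (u x) * gsq n u x ^ (q / 2))) / gsq n u x - (a (u x))⁻¹) * gsq n u x - ((1 + c) * (-(f (u x) * gsq n u x ^ (q / 2))) - gsq n u x / a (u x)) / (n:ℝ)) * β * gsq n u x ^ (d / 2) * u x ^ (β - 1)) * gsq n u x + (u x ^ β * gsq n u x ^ (d / 2) * (-2 * c * (-(f (u x) * gsq n u x ^ (q / 2))) / gsq n u x - c * f (u x) * q * gsq n u x ^ (q / 2 - 1) + 2 * (c * (-(f (u x) * gsq n u x ^ (q / 2))) / gsq n u x - (a (u x))⁻¹) + 2 / ((n:ℝ) * a (u x)) + (1 + c) / (n:ℝ) * (f (u x) * q * gsq n u x ^ (q / 2 - 1))) + (β * gsq n u x ^ (d / 2) * u x ^ (β - 1) + ((c * (-(f (u x) * gsq n u x ^ (q / 2))) / gsq n u x - (a (u x))⁻¹)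 * gsq n u x - ((1 + c) * (-(f (u x) * gsq n u x ^ (q / 2))) - gsq n u x / a (u x)) / (n:ℝ)) * d * u x ^ β * gsq n u x ^ (d / 2 - 1))) * (∑ j, mv n u x j * pd n j u x) + (d * u x ^ β * gsq n u x ^ (d / 2 - 1)) * (∑ j, mv n u x j ^ 2) + (u x ^ β * gsq n u x ^ (d / 2) * (-gsq n u x / a (u x) + c * (-(f (u x) * gsq n u x ^ (q / 2))) - ((1 + c) * (-(f (u x) * gsq n u x ^ (q / 2))) - gsq n u x / a (u x)) / (n:ℝ))) * lap n u x
        + (u x ^ β * gsq n u x ^ (d / 2)) * (∑ j, (∑ i, (pd n i (pd n j u) x * pd n j (pd n i u) x + pd n i u x * pd n j (pd n i (pd n j u)) x))) := by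
    calc (∑ j, (u x ^ β * gsq n u x ^ (d / 2) * (((-pd n j u x * (-(a (u x) ^ 2)⁻¹ * (a' (u x) * pd n j u x)) - (a (u x))⁻¹ * pd n j (pd n j u) x + c * (-(f (u x) * gsq n u x ^ (q / 2)) / gsq n u x) * pd n j (pd n j u) x + pd n j u x * (c * (-(f (u x) * gsq n u x ^ (q / 2)) * (-(gsq n u x ^ 2)⁻¹ * (2 * mv n u x j)) + (gsq n u x)⁻¹ * -(f (u x) * (q / 2 * gsq n u x ^ (q / 2 - 1) * (2 * mv n u x j)) + gsq n u x ^ (q / 2) * (f' (u x) * pd n j u x)))))) * gsq n u x + ((-(a (u x))⁻¹ * pd n j u x + c * (-(f (u x) * gsq n u x ^ (q / 2)) / gsq n u x) * pd n j u x - pd n j u x / a (u x) + c * (-(f (u x) * gsq n u x ^ (q / 2)) / gsq n u x) * pd n j u x)) * mv n u x j + (∑ i, (pd n i (pd n j u) x * pd n j (pd n i u) x + pd n i u x * pd n j (pd n i (pd n j u)) x)) + (-(1 / (n:ℝ)) * ((1 + c) * -(f (u x) * gsq n u x ^ (q / 2)) - gsq n u x / a (u x)) * pd n j (pd n j u) x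 - pd n j u x * (1 / (n:ℝ)) * ((1 + c) * -(f (u x) * (q / 2 * gsq n u x ^ (q / 2 - 1) * (2 * mv n u x j)) + gsq n u x ^ (q / 2) * (f' (u x) * pd n j u x)) - (gsq n u x * (-(a (u x) ^ 2)⁻¹ * (a' (u x) * pd n j u x)) + (a (u x))⁻¹ * (2 * mv n u x j))))) + (∑ i, (pd n i (pd n j u) x - pd n i u x * pd n j u x / a (u x) + c * (-(f (u x) * gsq n u x ^ (q / 2)) / gsq n u x) * (pd n i u x * pd n j u x) - 1 / (n:ℝ) * ((1 + c) * -(f (u x) * gsq n u x ^ (q / 2)) - gsq n u x / a (u x)) * if i = j then 1 else 0) * pd n i u x) * (u x ^ β * (d / 2 * gsq n u x ^ (d / 2 - 1) * (2 * mv n u x j)) + gsq n u x ^ (d / 2) * (β * u x ^ (β - 1) * pd n j u x))))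
        = ∑ j, ((u x ^ β * gsq n u x ^ (d / 2) * (a' (u x) * gsq n u x / a (u x) ^ 2 - c * gsq n u x ^ (q / 2) * f' (u x) + (1 + c) * gsq n u x ^ (q / 2) * f' (u x) / (n:ℝ) - gsq n u x * a' (u x) / ((n:ℝ) * a (u x) ^ 2)) + ((c * (-(f (u x) * gsq n u x ^ (q / 2))) / gsq n u x - (a (u x))⁻¹) * gsq n u x - ((1 + c) * (-(f (u x) * gsq n u x ^ (q / 2))) - gsq n u x / a (u x)) / (n:ℝ)) * β * gsq n u x ^ (d / 2) * u x ^ (β - 1)) * pd n j u x ^ 2 + (u x ^ β * gsq n u x ^ (d / 2) * (-2 * c * (-(f (u x) * gsq n u x ^ (q / 2))) / gsq n u x - c * f (u x) * q * gsq n u x ^ (q / 2 - 1) + 2 * (c * (-(f (u x) * gsq n u x ^ (q / 2))) / gsq n u x - (a (u x))⁻¹) + 2 / ((n:ℝ) * a (u x)) + (1 + c) / (n:ℝ) * (f (u x) * q * gsq n u x ^ (q / 2 - 1))) + (β * gsq n u x ^ (d / 2) * u x ^ (β - 1) + ((c * (-(f (u x) * gsq n u x ^ (q / 2))) / gsq n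 u x - (a (u x))⁻¹) * gsq n u x - ((1 + c) * (-(f (u x) * gsq n u x ^ (q / 2))) - gsq n u x / a (u x)) / (n:ℝ)) * d * u x ^ β * gsq n u x ^ (d / 2 - 1))) * (mv n u x j * pd n j u x)
            + (d * u x ^ β * gsq n u x ^ (d / 2 - 1)) * mv n u x j ^ 2 + (u x ^ β * gsq n u x ^ (d / 2) * (-gsq n u x / a (u x) + c * (-(f (u x) * gsq n u x ^ (q / 2))) - ((1 + c) * (-(f (u x) * gsq n u x ^ (q / 2))) - gsq n u x / a (u x)) / (n:ℝ))) * pd n j (pd n j u) x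
            + (u x ^ β * gsq n u x ^ (d / 2)) * (∑ i, (pd n i (pd n j u) x * pd n j (pd n i u) x + pd n i u x * pd n j (pd n i (pd n j u)) x)) + 0) :=
          Finset.sum_congr rfl fun j _ => by
            rw [hEp j]
            have hn0 : (n:ℝ) ≠ 0 := Nat.cast_ne_zero.mpr (by omega)
            field_simp
            ring
      _ = _ := by rw [collapse5]; ring
  -- ===== final assembly =====
  rw [hLS, hsumVAL, hlapN x, hTsum, hEsq, hEpP, hEp2]
  have e1 : u x ^ (-β) = (u x ^ β)⁻¹ := Real.rpow_neg hUpos.le β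
  have e2 : gsq n u x ^ (-d / 2) = (gsq n u x ^ (d / 2))⁻¹ := by
    rw [neg_div, Real.rpow_neg (hWnn x)]
  have e3 : u x ^ (β - 1) = u x ^ β / u x := Real.rpow_sub_one hU0 β
  have e4 : gsq n u x ^ (d / 2 - 1) = gsq n u x ^ (d / 2) / gsq n u x :=
    Real.rpow_sub_one hW0 _
  have e5 : gsq n u x ^ (q / 2 - 1) = gsq n u x ^ (q / 2) / gsq n u x :=
    Real.rpow_sub_one hW0 _
  have e6 : gsq n u x ^ ((2 + q) / 2) = gsq n u x * gsq n u x ^ (q / 2) := by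
    rw [show (2 + q) / 2 = 1 + q / 2 by ring, Real.rpow_add hWpos, Real.rpow_one]
  rw [e1, e2, e3, e4, e5, e6]
  have hn0 : (n:ℝ) ≠ 0 := Nat.cast_ne_zero.mpr (by omega)
  have hUb0 : u x ^ β ≠ 0 := (Real.rpow_pos_of_pos hUpos β).ne'
  have hWd0 : gsq n u x ^ (d / 2) ≠ 0 := (Real.rpow_pos_of_pos hWpos _).ne'
  have hRq0 : gsq n u x ^ (q / 2) ≠ 0 := (Real.rpow_pos_of_pos hWpos _).ne'
  field_simp
  ring
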